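/- Let F : M₁ × M₂ → R^r be a smooth submersion between Riemannian manifolds with dimensions n₁, n₂ ≥ r, let Σ = F⁻¹(0) with projections π₁, π₂ onto the factors, and let x ∈ Σ. Then odet(d_x π₂) = 0 if and only if odet(∂₁F(x)) = 0, and moreover odet(d_x π₁)·odet(∂₁F(x)) = odet(d_x π₂)·odet(∂₂F(x)). -/

import Mathlib

/-- The orthogonal determinant `odet L = sqrt(det (L L*))`. -/
noncomputable def odet {V W : Type*} [NormedAddCommGroup V] [InnerProductSpace ℝ V]
    [NormedAddCommGroup W] [InnerProductSpace ℝ W]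
    [FiniteDimensional ℝ V] [FiniteDimensional ℝ W] (L : V →ₗ[ℝ] W) : ℝ :=
  Real.sqrt (LinearMap.det (L ∘ₗ LinearMap.adjoint L))

open scoped RealInnerProductSpace Matrix

section auxlemmas

variable {E V W : Type*}
  [NormedAddCommGroup E] [InnerProductSpace ℝ E] [FiniteDimensional ℝ E]
  [NormedAddCommGroup V] [InnerProductSpace ℝ V] [FiniteDimensional ℝ V]
  [NormedAddCommGroup W] [InnerProductSpace ℝ W] [FiniteDimensional ℝ W]

private lemma odet_aux_det_nonneg (L : V →ₗ[ℝ] W) :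
    0 ≤ LinearMap.det (L ∘ₗ LinearMap.adjoint L) := by
  classical
  set bV := stdOrthonormalBasis ℝ V
  set bW := stdOrthonormalBasis ℝ W
  rw [← LinearMap.det_toMatrix bW.toBasis,
    LinearMap.toMatrix_comp bW.toBasis bV.toBasis bW.toBasis,
    LinearMap.toMatrix_adjoint]
  have hps : (LinearMap.toMatrix bV.toBasis bW.toBasis L *
      (LinearMap.toMatrix bV.toBasis bW.toBasis L)ᴴ).PosSemidef :=
    Matrix.posSemidef_self_mul_conjTranspose _
  rw [hps.isHermitian.det_eq_prod_eigenvalues]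
  refine Finset.prod_nonneg fun i _ => ?_
  simpa using hps.eigenvalues_nonneg i

private lemma odet_eq_zero_iff' (L : V →ₗ[ℝ] W) :
    odet L = 0 ↔ LinearMap.det (L ∘ₗ LinearMap.adjoint L) = 0 := by
  simp only [odet, Real.sqrt_eq_zero']
  exact ⟨fun h => le_antisymm h (odet_aux_det_nonneg L), fun h => h.le⟩

private lemma matrix_schur_aux {v w : Type*} [Fintype v] [DecidableEq v] [Fintype w]
    [DecidableEq w] (g g' : Matrix w w ℝ) (h2 : g' * g = 1)
    (M : Matrix w v ℝ) (D : Matrix v w ℝ) :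
    (1 - D * (g' * M)).det * g.det = (g - M * D).det := by
  have e1 : (1 - D * (g' * M)).det = (1 - (g' * M) * D).det :=
    Matrix.det_one_sub_mul_comm D (g' * M)
  have e2 : (1 : Matrix w w ℝ) - g' * M * D = g' * (g - M * D) := by
    rw [Matrix.mul_sub, h2, Matrix.mul_assoc]
  have e3 : g'.det * g.det = 1 := by rw [← Matrix.det_mul, h2, Matrix.det_one]
  rw [e1, e2, Matrix.det_mul]
  calc g'.det * (g - M * D).det * g.det = (g'.det * g.det) * (g - M * D).det := by ring
    _ = (g - M * D).det := by rw [e3, one_mul]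

private lemma bbadj_bijective (B : E →ₗ[ℝ] W) (hB : Function.Surjective B) :
    Function.Bijective (B ∘ₗ LinearMap.adjoint B) := by
  have hinj : Function.Injective (B ∘ₗ LinearMap.adjoint B) := by
    rw [← LinearMap.ker_eq_bot, eq_bot_iff]
    intro x hx
    rw [LinearMap.mem_ker] at hx
    have hBx : LinearMap.adjoint B x = 0 := by
      have h0 : ⟪LinearMap.adjoint B x, LinearMap.adjoint B x⟫ = 0 := by
        rw [LinearMap.adjoint_inner_left]
        have : B (LinearMap.adjoint B x) = 0 := hx
        rw [this, inner_zero_right]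
      exact inner_self_eq_zero.mp h0
    obtain ⟨z, hz⟩ := hB x
    have h0 : ⟪x, x⟫ = 0 := by
      calc ⟪x, x⟫ = ⟪x, B z⟫ := by rw [hz]
        _ = ⟪LinearMap.adjoint B x, z⟫ := (LinearMap.adjoint_inner_left B z x).symm
        _ = 0 := by rw [hBx, inner_zero_left]
    simpa using inner_self_eq_zero.mp h0
  exact ⟨hinj, LinearMap.injective_iff_surjective.mp hinj⟩

private lemma schur_key (A : E →ₗ[ℝ] V) (hA : A ∘ₗ LinearMap.adjoint A = LinearMap.id)
    (B : E →ₗ[ℝ] W) (hB : Function.Surjective B)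
    (T₀ : Submodule ℝ E) (hT₀ : T₀ = LinearMap.ker B) :
    LinearMap.det ((A ∘ₗ T₀.subtype) ∘ₗ
        LinearMap.adjoint (A ∘ₗ T₀.subtype)) *
      LinearMap.det (B ∘ₗ LinearMap.adjoint B) =
    LinearMap.det (B ∘ₗ LinearMap.adjoint B -
      (B ∘ₗ LinearMap.adjoint A) ∘ₗ LinearMap.adjoint (B ∘ₗ LinearMap.adjoint A)) := by
  classical
  subst hT₀
  set G : W →ₗ[ℝ] W := B ∘ₗ LinearMap.adjoint B with hGdef
  have hGbij : Function.Bijective G := bbadj_bijective B hB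
  set Ge : W ≃ₗ[ℝ] W := LinearEquiv.ofBijective G hGbij with hGe
  set G' : W →ₗ[ℝ] W := Ge.symm.toLinearMap with hG'
  have hGG' : ∀ y, G (G' y) = y := fun y => Ge.apply_symm_apply y
  have hG'G : ∀ y, G' (G y) = y := fun y => Ge.symm_apply_apply y
  set T := LinearMap.ker B with hTdef
  set Q : E →ₗ[ℝ] E := LinearMap.id - LinearMap.adjoint B ∘ₗ G' ∘ₗ B with hQ
  have hQmem : ∀ x, Q x ∈ T := by
    intro x
    rw [hTdef, LinearMap.mem_ker, hQ]
    simp only [LinearMap.sub_apply, LinearMap.id_apply, LinearMap.comp_apply, map_sub]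
    have : B (LinearMap.adjoint B (G' (B x))) = G (G' (B x)) := rfl
    rw [this, hGG', sub_self]
  have hQr : Q.codRestrict T hQmem = LinearMap.adjoint T.subtype := by
    rw [LinearMap.eq_adjoint_iff]
    intro x y
    show ⟪(Q x : E), (y : E)⟫ = ⟪x, (y : E)⟫
    have hy : B (y : E) = 0 := y.2
    rw [hQ]
    simp only [LinearMap.sub_apply, LinearMap.id_apply, LinearMap.comp_apply, inner_sub_left]
    rw [LinearMap.adjoint_inner_left, hy, inner_zero_right, sub_zero]
  have hPi : T.subtype ∘ₗ LinearMap.adjoint T.subtype = Q := by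
    rw [← hQr]; ext x; rfl
  set C : V →ₗ[ℝ] W := B ∘ₗ LinearMap.adjoint A with hC
  have hCadj : LinearMap.adjoint C = A ∘ₗ LinearMap.adjoint B := by
    rw [hC, LinearMap.adjoint_comp, LinearMap.adjoint_adjoint]
  have hmain : (A ∘ₗ T.subtype) ∘ₗ LinearMap.adjoint (A ∘ₗ T.subtype)
      = LinearMap.id - LinearMap.adjoint C ∘ₗ G' ∘ₗ C := by
    ext x
    have h1 : T.subtype (LinearMap.adjoint T.subtype (LinearMap.adjoint A x)) =
        Q (LinearMap.adjoint A x) := LinearMap.ext_iff.mp hPi (LinearMap.adjoint A x)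
    have h2 : A (LinearMap.adjoint A x) = x := LinearMap.ext_iff.mp hA x
    have h3 : LinearMap.adjoint C (G' (C x)) =
        A (LinearMap.adjoint B (G' (C x))) := LinearMap.ext_iff.mp hCadj (G' (C x))
    simp only [LinearMap.comp_apply, LinearMap.adjoint_comp, LinearMap.sub_apply,
      LinearMap.id_apply]
    rw [h1, hQ]
    simp only [LinearMap.sub_apply, LinearMap.id_apply, LinearMap.comp_apply, map_sub]
    rw [h2, h3]
    rfl
  rw [hmain]
  set bV : Module.Basis (Fin (Module.finrank ℝ V)) ℝ V := Module.finBasis ℝ V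
  set bW : Module.Basis (Fin (Module.finrank ℝ W)) ℝ W := Module.finBasis ℝ W
  have hG'Gc : G' ∘ₗ G = LinearMap.id := by ext y; exact hG'G y
  rw [← LinearMap.det_toMatrix bV (LinearMap.id - LinearMap.adjoint C ∘ₗ G' ∘ₗ C),
    ← LinearMap.det_toMatrix bW G, ← LinearMap.det_toMatrix bW (G - C ∘ₗ LinearMap.adjoint C)]
  rw [map_sub, map_sub, LinearMap.toMatrix_id,
    LinearMap.toMatrix_comp bV bW bV (LinearMap.adjoint C) (G' ∘ₗ C),
    LinearMap.toMatrix_comp bV bW bW G' C,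
    LinearMap.toMatrix_comp bW bV bW C (LinearMap.adjoint C)]
  refine matrix_schur_aux _ _ ?_ _ _
  rw [← LinearMap.toMatrix_comp bW bW bW G' G, hG'Gc, LinearMap.toMatrix_id]

end auxlemmas

/-- Pointwise content of the double-fibration lemma: let `∂₁F : T₁ → ℝ^r`, `∂₂F : T₂ → ℝ^r`
be the partial differentials at a point `x ∈ Σ = F⁻¹(0)` of a submersion `F`, so that the
tangent space `T` of `Σ` at `x` is the kernel of `(v₁,v₂) ↦ ∂₁F v₁ + ∂₂F v₂` inside the
orthogonal direct sum `T₁ ⊕ T₂` (with the restricted product metric), and let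
`dπ₁ : T → T₁`, `dπ₂ : T → T₂` be the restricted projections. Then `odet(dπ₂) = 0` iff
`odet(∂₁F) = 0`, and `odet(dπ₁)·odet(∂₁F) = odet(dπ₂)·odet(∂₂F)`. -/
theorem odet_projection_eq_odet_partial
    {V₁ V₂ : Type*} [NormedAddCommGroup V₁] [InnerProductSpace ℝ V₁]
    [NormedAddCommGroup V₂] [InnerProductSpace ℝ V₂]
    [FiniteDimensional ℝ V₁] [FiniteDimensional ℝ V₂]
    (r : ℕ) (hr1 : r ≤ Module.finrank ℝ V₁) (hr2 : r ≤ Module.finrank ℝ V₂)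
    (F₁ : V₁ →ₗ[ℝ] EuclideanSpace ℝ (Fin r)) (F₂ : V₂ →ₗ[ℝ] EuclideanSpace ℝ (Fin r))
    (hsub : Function.Surjective (F₁.coprod F₂))
    (T : Submodule ℝ (WithLp 2 (V₁ × V₂)))
    (hT : T = LinearMap.ker
      ((F₁.coprod F₂) ∘ₗ (WithLp.linearEquiv 2 ℝ (V₁ × V₂)).toLinearMap))
    (dπ₁ : T →ₗ[ℝ] V₁) (dπ₂ : T →ₗ[ℝ] V₂)
    (hπ₁ : dπ₁ = (LinearMap.fst ℝ V₁ V₂) ∘ₗ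
      (WithLp.linearEquiv 2 ℝ (V₁ × V₂)).toLinearMap ∘ₗ T.subtype)
    (hπ₂ : dπ₂ = (LinearMap.snd ℝ V₁ V₂) ∘ₗ
      (WithLp.linearEquiv 2 ℝ (V₁ × V₂)).toLinearMap ∘ₗ T.subtype) :
    (odet dπ₂ = 0 ↔ odet F₁ = 0) ∧ odet dπ₁ * odet F₁ = odet dπ₂ * odet F₂ := by
  classical
  set e : WithLp 2 (V₁ × V₂) →ₗ[ℝ] V₁ × V₂ :=
    (WithLp.linearEquiv 2 ℝ (V₁ × V₂)).toLinearMap with he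
  set A₁ : WithLp 2 (V₁ × V₂) →ₗ[ℝ] V₁ := LinearMap.fst ℝ V₁ V₂ ∘ₗ e with hA₁
  set A₂ : WithLp 2 (V₁ × V₂) →ₗ[ℝ] V₂ := LinearMap.snd ℝ V₁ V₂ ∘ₗ e with hA₂
  set B : WithLp 2 (V₁ × V₂) →ₗ[ℝ] EuclideanSpace ℝ (Fin r) := (F₁.coprod F₂) ∘ₗ e with hB
  set J₁ : V₁ →ₗ[ℝ] WithLp 2 (V₁ × V₂) :=
    (WithLp.linearEquiv 2 ℝ (V₁ × V₂)).symm.toLinearMap ∘ₗ LinearMap.inl ℝ V₁ V₂ with hJ₁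
  set J₂ : V₂ →ₗ[ℝ] WithLp 2 (V₁ × V₂) :=
    (WithLp.linearEquiv 2 ℝ (V₁ × V₂)).symm.toLinearMap ∘ₗ LinearMap.inr ℝ V₁ V₂ with hJ₂
  have h1 : J₁ = LinearMap.adjoint A₁ := by
    rw [LinearMap.eq_adjoint_iff]
    intro x y
    rw [hJ₁, hA₁]
    simp [WithLp.prod_inner_apply, he,
      WithLp.linearEquiv_apply]
  have h2 : J₂ = LinearMap.adjoint A₂ := by
    rw [LinearMap.eq_adjoint_iff]
    intro x y
    rw [hJ₂, hA₂]
    simp [WithLp.prod_inner_apply, he,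
      WithLp.linearEquiv_apply]
  have hA₁J₁ : A₁ ∘ₗ J₁ = LinearMap.id := by
    ext x
    simp [hA₁, hJ₁, he, WithLp.linearEquiv_apply, WithLp.linearEquiv_symm_apply,
      Equiv.apply_symm_apply]
  have hA₂J₂ : A₂ ∘ₗ J₂ = LinearMap.id := by
    ext x
    simp [hA₂, hJ₂, he, WithLp.linearEquiv_apply, WithLp.linearEquiv_symm_apply,
      Equiv.apply_symm_apply]
  have hBJ₁ : B ∘ₗ J₁ = F₁ := by
    ext x
    simp [hB, hJ₁, he, WithLp.linearEquiv_apply, WithLp.linearEquiv_symm_apply,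
      Equiv.apply_symm_apply]
  have hBJ₂ : B ∘ₗ J₂ = F₂ := by
    ext x
    simp [hB, hJ₂, he, WithLp.linearEquiv_apply, WithLp.linearEquiv_symm_apply,
      Equiv.apply_symm_apply]
  have hA₁adj : A₁ ∘ₗ LinearMap.adjoint A₁ = LinearMap.id := by rw [← h1]; exact hA₁J₁
  have hA₂adj : A₂ ∘ₗ LinearMap.adjoint A₂ = LinearMap.id := by rw [← h2]; exact hA₂J₂
  have hBA₁ : B ∘ₗ LinearMap.adjoint A₁ = F₁ := by rw [← h1]; exact hBJ₁
  have hBA₂ : B ∘ₗ LinearMap.adjoint A₂ = F₂ := by rw [← h2]; exact hBJ₂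
  have hBsum : B = F₁ ∘ₗ A₁ + F₂ ∘ₗ A₂ := by
    ext x; simp [hB, hA₁, hA₂]
  have hBadj : LinearMap.adjoint B = J₁ ∘ₗ LinearMap.adjoint F₁ + J₂ ∘ₗ LinearMap.adjoint F₂ := by
    rw [hBsum, map_add, LinearMap.adjoint_comp, LinearMap.adjoint_comp, ← h1, ← h2]
  have hBB : B ∘ₗ LinearMap.adjoint B =
      F₁ ∘ₗ LinearMap.adjoint F₁ + F₂ ∘ₗ LinearMap.adjoint F₂ := by
    rw [hBadj, LinearMap.comp_add,
      ← LinearMap.comp_assoc (LinearMap.adjoint F₁) J₁ B,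
      ← LinearMap.comp_assoc (LinearMap.adjoint F₂) J₂ B, hBJ₁, hBJ₂]
  have hBsurj : Function.Surjective B := by
    rw [hB, LinearMap.coe_comp]
    exact hsub.comp (WithLp.linearEquiv 2 ℝ (V₁ × V₂)).surjective
  have hd1 : dπ₁ = A₁ ∘ₗ T.subtype := by
    rw [hπ₁, hA₁]; exact (LinearMap.comp_assoc _ _ _).symm
  have hd2 : dπ₂ = A₂ ∘ₗ T.subtype := by
    rw [hπ₂, hA₂]; exact (LinearMap.comp_assoc _ _ _).symm
  have key1 := schur_key A₁ hA₁adj B hBsurj T hT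
  have key2 := schur_key A₂ hA₂adj B hBsurj T hT
  have hsub1 : B ∘ₗ LinearMap.adjoint B - F₁ ∘ₗ LinearMap.adjoint F₁ =
      F₂ ∘ₗ LinearMap.adjoint F₂ := by rw [hBB, add_sub_cancel_left]
  have hsub2 : B ∘ₗ LinearMap.adjoint B - F₂ ∘ₗ LinearMap.adjoint F₂ =
      F₁ ∘ₗ LinearMap.adjoint F₁ := by rw [hBB, add_sub_cancel_right]
  rw [hBA₁, hsub1, ← hd1] at key1
  rw [hBA₂, hsub2, ← hd2] at key2
  -- abbreviations
  set a := LinearMap.det (dπ₁ ∘ₗ LinearMap.adjoint dπ₁) with ha'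
  set b := LinearMap.det (dπ₂ ∘ₗ LinearMap.adjoint dπ₂) with hb'
  set f₁ := LinearMap.det (F₁ ∘ₗ LinearMap.adjoint F₁) with hf₁'
  set f₂ := LinearMap.det (F₂ ∘ₗ LinearMap.adjoint F₂) with hf₂'
  set g := LinearMap.det (B ∘ₗ LinearMap.adjoint B) with hg'
  have hgne : g ≠ 0 := by
    have hbij := bbadj_bijective B hBsurj
    have := (LinearEquiv.ofBijective (B ∘ₗ LinearMap.adjoint B) hbij).isUnit_det'
    have hc : ((LinearEquiv.ofBijective (B ∘ₗ LinearMap.adjoint B) hbij :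
        _ ≃ₗ[ℝ] _) : _ →ₗ[ℝ] _) = B ∘ₗ LinearMap.adjoint B := LinearMap.ext fun _ => rfl
    rw [hc] at this
    simpa [hg'] using this.ne_zero
  have hann : 0 ≤ a := odet_aux_det_nonneg dπ₁
  have hbnn : 0 ≤ b := odet_aux_det_nonneg dπ₂
  constructor
  · rw [odet_eq_zero_iff', odet_eq_zero_iff', ← hb', ← hf₁', ← key2, mul_eq_zero,
      or_iff_left hgne]
  · show Real.sqrt a * Real.sqrt f₁ = Real.sqrt b * Real.sqrt f₂
    rw [← Real.sqrt_mul hann, ← Real.sqrt_mul hbnn]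
    congr 1
    calc a * f₁ = a * (b * g) := by rw [key2]
      _ = b * (a * g) := by ring
      _ = b * f₂ := by rw [key1]
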